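/- Let V ∈ ℝ[x₁,…,x_n], ρ > 0, κ_V > 0. Suppose there exist polynomials λ₀, λ₁, …, λₘ, each SOS, such that (1+λ₀(x))·(V(x)−ρ)·(xᵀx) − Σ_{i=1}^m λᵢ(x)·(V̇(x,uⁱ)+κ_V V(x)) is SOS. Then for every x ∈ ℝⁿ with V(x) < ρ and x ≠ 0, there exists u ∈ 𝒰 such that V̇(x,u) < −κ_V V(x). -/
import Mathlib


open MvPolynomial Finset

/-- A polynomial is a sum of squares. -/
def IsSOS {n : ℕ} (p : MvPolynomial (Fin n) ℝ) : Prop :=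
  ∃ (N : ℕ) (q : Fin N → MvPolynomial (Fin n) ℝ), p = ∑ i, (q i) ^ 2

/-- `V̇(x,u) = ∇V(x)ᵀ(f(x) + g(x)u)` as a polynomial in `x`, for a fixed input vector `u`. -/
noncomputable def VdotPoly {n nu : ℕ} (V : MvPolynomial (Fin n) ℝ)
    (f : Fin n → MvPolynomial (Fin n) ℝ) (g : Fin n → Fin nu → MvPolynomial (Fin n) ℝ)
    (u : Fin nu → ℝ) : MvPolynomial (Fin n) ℝ :=
  ∑ i, pderiv i V * (f i + ∑ j, C (u j) * g i j)

/-- `V̇(x,u)` evaluated at the state `x`. -/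
noncomputable def VdotFun {n nu : ℕ} (V : MvPolynomial (Fin n) ℝ)
    (f : Fin n → MvPolynomial (Fin n) ℝ) (g : Fin n → Fin nu → MvPolynomial (Fin n) ℝ)
    (x : Fin n → ℝ) (u : Fin nu → ℝ) : ℝ :=
  eval x (VdotPoly V f g u)

lemma IsSOS.eval_nonneg {n : ℕ} {p : MvPolynomial (Fin n) ℝ} (h : IsSOS p)
    (x : Fin n → ℝ) : 0 ≤ eval x p := by
  obtain ⟨N, q, rfl⟩ := h
  simp only [map_sum, map_pow]
  exact Finset.sum_nonneg fun i _ => sq_nonneg _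

theorem clf_s_procedure_sufficient {n nu m : ℕ}
    (V : MvPolynomial (Fin n) ℝ)
    (f : Fin n → MvPolynomial (Fin n) ℝ) (g : Fin n → Fin nu → MvPolynomial (Fin n) ℝ)
    (uvert : Fin m → Fin nu → ℝ)
    (ρ κV : ℝ) (hρ : 0 < ρ) (hκ : 0 < κV)
    (lam0 : MvPolynomial (Fin n) ℝ) (lam : Fin m → MvPolynomial (Fin n) ℝ)
    (hlam0 : IsSOS lam0) (hlam : ∀ i, IsSOS (lam i))
    (hmain : IsSOS ((1 + lam0) * ((V - C ρ) * ∑ i, (X i : MvPolynomial (Fin n) ℝ) ^ 2)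
        - ∑ i, lam i * (VdotPoly V f g (uvert i) + C κV * V))) :
    ∀ x : Fin n → ℝ, eval x V < ρ → x ≠ 0 →
      ∃ u ∈ convexHull ℝ (Set.range uvert), VdotFun V f g x u < -κV * eval x V := by
  intro x hV hx
  have hs := hmain.eval_nonneg x
  simp only [map_sub, map_mul, map_add, map_sum, map_pow, map_one, eval_C, eval_X] at hs
  -- ∑ x i ^ 2 > 0
  have hxsq : 0 < ∑ i, x i ^ 2 := by
    have : ∃ i, x i ≠ 0 := by
      by_contra h
      push_neg at h
      exact hx (funext h)
    obtain ⟨i, hi⟩ := this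
    exact Finset.sum_pos' (fun j _ => sq_nonneg _) ⟨i, Finset.mem_univ i, by positivity⟩
  have h1 : (1 + eval x lam0) * ((eval x V - ρ) * ∑ i, x i ^ 2) < 0 := by
    apply mul_neg_of_pos_of_neg
    · have := (hlam0.eval_nonneg x); linarith
    · exact mul_neg_of_neg_of_pos (by linarith) hxsq
  have h2 : ∑ i, eval x (lam i) * (eval x (VdotPoly V f g (uvert i)) + κV * eval x V) < 0 := by
    linarith
  -- some term is negative
  have h3 : ∃ i, eval x (VdotPoly V f g (uvert i)) + κV * eval x V < 0 := by
    by_contra h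
    push_neg at h
    have : 0 ≤ ∑ i, eval x (lam i) * (eval x (VdotPoly V f g (uvert i)) + κV * eval x V) :=
      Finset.sum_nonneg fun i _ => mul_nonneg ((hlam i).eval_nonneg x) (h i)
    linarith
  obtain ⟨i, hi⟩ := h3
  exact ⟨uvert i, subset_convexHull ℝ _ ⟨i, rfl⟩, by unfold VdotFun; linarith⟩
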